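/- Let v_1,...,v_k ∈ ℤ^n and let 𝒵 = { z ∈ ℕ^k : z_1 v_1 + z_2 v_2 + ··· + z_k v_k = 0 in ℤ^n }. Then the generating function f_𝒵(y_1,...,y_k) = Σ_{z ∈ 𝒵} y_1^{z_1} y_2^{z_2} ··· y_k^{z_k} is an ℕ-rational power series. -/

import Mathlib

/-- The class of ℕ-rational multivariate power series: the smallest class of power series in
`ℕ[[x]]` containing the polynomials and closed under addition, multiplication and
quasi-inverse `h ↦ 1/(1-h)` (for `h` with zero constant term, `g = 1/(1-h)` is the unique
series with `g = 1 + h * g`). -/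
inductive MvPowerSeries.IsNRational {σ : Type} : MvPowerSeries σ ℕ → Prop
  | poly (P : MvPolynomial σ ℕ) : MvPowerSeries.IsNRational (P : MvPowerSeries σ ℕ)
  | add {f g : MvPowerSeries σ ℕ} : MvPowerSeries.IsNRational f →
      MvPowerSeries.IsNRational g → MvPowerSeries.IsNRational (f + g)
  | mul {f g : MvPowerSeries σ ℕ} : MvPowerSeries.IsNRational f →
      MvPowerSeries.IsNRational g → MvPowerSeries.IsNRational (f * g)
  | quasiInv {h g : MvPowerSeries σ ℕ} : MvPowerSeries.IsNRational h →
      MvPowerSeries.constantCoeff h = 0 → g = 1 + h * g →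
      MvPowerSeries.IsNRational g

namespace NRat

open MvPowerSeries (IsNRational)

variable {σ : Type}

open Classical in
/-- Indicator power series of a set of exponents. -/
noncomputable def ind (S : Set (σ →₀ ℕ)) : MvPowerSeries σ ℕ :=
  fun d => if d ∈ S then 1 else 0

lemma coeff_ind (S : Set (σ →₀ ℕ)) (d : σ →₀ ℕ) [Decidable (d ∈ S)] :
    MvPowerSeries.coeff d (ind S) = if d ∈ S then 1 else 0 := by
  rw [MvPowerSeries.coeff_apply, ind]
  congr

lemma ind_union (S T : Set (σ →₀ ℕ)) (h : ∀ d, ¬ (d ∈ S ∧ d ∈ T)) :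
    ind (S ∪ T) = ind S + ind T := by
  classical
  ext d
  rw [map_add, coeff_ind, coeff_ind, coeff_ind]
  by_cases hS : d ∈ S
  · have hT : d ∉ T := fun hT => h d ⟨hS, hT⟩
    simp [Set.mem_union, hS, hT]
  · by_cases hT : d ∈ T <;> simp [Set.mem_union, hS, hT]

lemma ind_mul_ind {S T U : Set (σ →₀ ℕ)}
    (h1 : ∀ d ∈ U, ∃ a b, a ∈ S ∧ b ∈ T ∧ a + b = d)
    (h2 : ∀ a b, a ∈ S → b ∈ T → a + b ∈ U)
    (h3 : ∀ a b a' b', a ∈ S → b ∈ T → a' ∈ S → b' ∈ T → a + b = a' + b' → a = a' ∧ b = b') :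
    ind S * ind T = ind U := by
  classical
  ext d
  rw [MvPowerSeries.coeff_mul]
  by_cases hd : d ∈ U
  · obtain ⟨a, b, haS, hbT, hab⟩ := h1 d hd
    rw [coeff_ind, if_pos hd]
    rw [Finset.sum_eq_single_of_mem (a, b) (Finset.HasAntidiagonal.mem_antidiagonal.2 hab)]
    · rw [coeff_ind, coeff_ind, if_pos haS, if_pos hbT, one_mul]
    · rintro ⟨x, y⟩ hxy hne
      rw [Finset.HasAntidiagonal.mem_antidiagonal] at hxy
      rw [coeff_ind, coeff_ind]
      by_cases hx : x ∈ S
      · by_cases hy : y ∈ T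
        · obtain ⟨rfl, rfl⟩ := h3 x y a b hx hy haS hbT (by rw [hxy, hab])
          exact absurd rfl hne
        · rw [if_neg hy, mul_zero]
      · rw [if_neg hx, zero_mul]
  · rw [coeff_ind, if_neg hd]
    refine Finset.sum_eq_zero ?_
    rintro ⟨x, y⟩ hxy
    rw [Finset.HasAntidiagonal.mem_antidiagonal] at hxy
    rw [coeff_ind, coeff_ind]
    by_cases hx : x ∈ S
    · by_cases hy : y ∈ T
      · exact absurd (hxy ▸ h2 x y hx hy) hd
      · rw [if_neg hy, mul_zero]
    · rw [if_neg hx, zero_mul]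

lemma isNRational_of_finite {S : Set (σ →₀ ℕ)} (h : S.Finite) : IsNRational (ind S) := by
  classical
  have he : ind S =
      ((∑ d ∈ h.toFinset, MvPolynomial.monomial d (1 : ℕ) : MvPolynomial σ ℕ) :
        MvPowerSeries σ ℕ) := by
    ext e
    rw [coeff_ind, MvPolynomial.coeff_coe, MvPolynomial.coeff_sum]
    simp only [MvPolynomial.coeff_monomial]
    rw [Finset.sum_ite_eq' h.toFinset e (fun _ => (1:ℕ))]
    simp [Set.Finite.mem_toFinset]
  rw [he]
  exact MvPowerSeries.IsNRational.poly _

lemma ind_shift (x : σ →₀ ℕ) (T : Set (σ →₀ ℕ)) :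
    ind {d | x ≤ d ∧ d - x ∈ T} = (MvPowerSeries.monomial x 1) * ind T := by
  classical
  ext d
  rw [MvPowerSeries.coeff_monomial_mul, coeff_ind]
  by_cases hx : x ≤ d
  · rw [if_pos hx, one_mul, coeff_ind]
    by_cases hT : d - x ∈ T
    · rw [if_pos hT, if_pos (Set.mem_setOf.2 ⟨hx, hT⟩)]
    · rw [if_neg hT, if_neg (fun hc => hT hc.2)]
  · rw [if_neg hx, if_neg (fun hc => hx hc.1)]


/-- The set of exponents supported inside `V`. -/
def freeSet (V : Finset σ) : Set (σ →₀ ℕ) := {d | ∀ j ∉ V, d j = 0}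

lemma isNRational_geom [DecidableEq σ] (i : σ) : IsNRational (ind (freeSet ({i} : Finset σ))) := by
  classical
  refine MvPowerSeries.IsNRational.quasiInv
    (h := ((MvPolynomial.monomial (Finsupp.single i 1) 1 : MvPolynomial σ ℕ) : MvPowerSeries σ ℕ))
    (MvPowerSeries.IsNRational.poly _) ?_ ?_
  · rw [MvPolynomial.coe_monomial, ← MvPowerSeries.coeff_zero_eq_constantCoeff]
    exact MvPowerSeries.coeff_monomial_ne
      (fun h => one_ne_zero (Finsupp.single_eq_zero.1 h.symm)) 1
  · ext d
    rw [MvPolynomial.coe_monomial, map_add, MvPowerSeries.coeff_one,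
      MvPowerSeries.coeff_monomial_mul, coeff_ind]
    by_cases hd : d = 0
    · subst hd
      have h1 : ¬ Finsupp.single i 1 ≤ (0 : σ →₀ ℕ) := by
        intro hc
        simpa using (Finsupp.le_def.1 hc i)
      rw [if_pos rfl, if_neg h1, if_pos (by intro j _; rfl)]
      norm_num
    · rw [if_neg hd]
      by_cases hm : d ∈ freeSet ({i} : Finset σ)
      · have hdi : 1 ≤ d i := by
          by_contra hc
          apply hd
          ext j
          simp only [Finsupp.coe_zero, Pi.zero_apply]
          by_cases hj : j = i
          · subst hj; omega
          · exact hm j (by simp [hj])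
        have hle : Finsupp.single i 1 ≤ d := Finsupp.single_le_iff.2 hdi
        have hsub : d - Finsupp.single i 1 ∈ freeSet ({i} : Finset σ) := by
          intro j hj
          rw [Finsupp.tsub_apply, hm j hj]
          exact Nat.zero_sub _
        rw [if_pos hm, if_pos hle, coeff_ind, if_pos hsub, one_mul, zero_add]
      · obtain ⟨j, hji, hdj⟩ : ∃ j, j ∉ ({i} : Finset σ) ∧ d j ≠ 0 := by
          by_contra hc
          push_neg at hc
          exact hm (fun j hj => hc j hj)
        rw [if_neg hm, zero_add]
        by_cases hle : Finsupp.single i 1 ≤ d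
        · have : d - Finsupp.single i 1 ∉ freeSet ({i} : Finset σ) := by
            intro hc
            apply hdj
            have hji' : j ≠ i := by simpa using hji
            have := hc j hji
            rwa [Finsupp.tsub_apply, Finsupp.single_eq_of_ne hji',
              Nat.sub_zero] at this
          rw [if_pos hle, coeff_ind, if_neg this, one_mul]
        · rw [if_neg hle]

lemma isNRational_free [DecidableEq σ] (V : Finset σ) : IsNRational (ind (freeSet V)) := by
  classical
  induction V using Finset.induction with
  | empty =>
      have h : freeSet (∅ : Finset σ) = {0} := by
        ext d
        constructor
        · intro hd
          exact Finsupp.ext (fun j => hd j (by simp))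
        · rintro rfl j _
          rfl
      rw [h]
      exact isNRational_of_finite (Set.finite_singleton _)
  | @insert i V hi ih =>
      have key : ind (freeSet ({i} : Finset σ)) * ind (freeSet V) = ind (freeSet (insert i V)) := by
        apply ind_mul_ind
        · intro d hd
          refine ⟨Finsupp.single i (d i), d - Finsupp.single i (d i), ?_, ?_, ?_⟩
          · intro j hj
            exact Finsupp.single_eq_of_ne (fun h => hj (by simp [h]))
          · intro j hj
            rw [Finsupp.tsub_apply]
            by_cases hji : j = i
            · subst hji; simp
            · rw [hd j (by simp [hji, hj]), Finsupp.single_eq_of_ne hji]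
              rfl
          · exact add_tsub_cancel_of_le (Finsupp.single_le_iff.2 le_rfl)
        · intro a b ha hb j hj
          simp only [Finset.mem_insert, not_or] at hj
          rw [Finsupp.add_apply, ha j (by simp [hj.1]), hb j hj.2]
        · intro a b a' b' ha hb ha' hb' heq
          have hbi : b i = 0 := hb i hi
          have hbi' : b' i = 0 := hb' i hi
          have hai : a i = a' i := by
            have := DFunLike.congr_fun heq i
            rw [Finsupp.add_apply, Finsupp.add_apply, hbi, hbi'] at this
            omega
          have ha_eq : a = a' := by
            ext j
            by_cases hji : j = i
            · subst hji; exact hai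
            · rw [ha j (by simp [hji]), ha' j (by simp [hji])]
          refine ⟨ha_eq, ?_⟩
          rw [ha_eq] at heq
          exact add_left_cancel heq
      have := MvPowerSeries.IsNRational.mul (isNRational_geom i) ih
      rwa [key] at this

/-- Solutions avoiding a finite list of "forbidden lower bounds", supported in `V`:
the complement of the monomial ideal generated by `B`, within variables `V`. -/
def SS (B : List (σ →₀ ℕ)) (V : Finset σ) : Set (σ →₀ ℕ) :=
  {e | (∀ j ∉ V, e j = 0) ∧ ∀ b ∈ B, ¬ b ≤ e}

/-- Total measure of a list of exponents restricted to `V`. -/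
def msum (B : List (σ →₀ ℕ)) (V : Finset σ) : ℕ := (B.map fun b => ∑ j ∈ V, b j).sum

lemma msum_le_of_sublist {B B' : List (σ →₀ ℕ)} (h : List.Sublist B' B) (V : Finset σ) :
    msum B' V ≤ msum B V :=
  List.Sublist.sum_le_sum (h.map _) (fun a _ => Nat.zero_le a)

lemma msum_mono_V (B : List (σ →₀ ℕ)) {V' V : Finset σ} (h : V' ⊆ V) :
    msum B V' ≤ msum B V := by
  induction B with
  | nil => exact le_rfl
  | cons b B ih =>
      have h1 : ∑ j ∈ V', b j ≤ ∑ j ∈ V, b j :=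
        Finset.sum_le_sum_of_subset h
      simp only [msum, List.map_cons, List.sum_cons] at ih ⊢
      omega

lemma isNRational_SS [DecidableEq σ] (N : ℕ) :
    ∀ (B : List (σ →₀ ℕ)) (V : Finset σ), V.card + msum B V ≤ N →
    IsNRational (ind (SS B V)) := by
  induction N using Nat.strong_induction_on with
  | _ N IHN =>
  intro B V hN
  classical
  set B₀ := B.filter (fun b => decide (b.support ⊆ V)) with hB₀def
  have hmem₀ : ∀ b, b ∈ B₀ ↔ b ∈ B ∧ b.support ⊆ V := by
    intro b; simp [hB₀def, List.mem_filter]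
  have hSS : SS B V = SS B₀ V := by
    ext e
    constructor
    · rintro ⟨hsupp, hb⟩
      exact ⟨hsupp, fun b hbB₀ => hb b ((hmem₀ b).1 hbB₀).1⟩
    · rintro ⟨hsupp, hb⟩
      refine ⟨hsupp, fun b hbB hble => ?_⟩
      by_cases hbs : b.support ⊆ V
      · exact hb b ((hmem₀ b).2 ⟨hbB, hbs⟩) hble
      · obtain ⟨j, hjs, hjV⟩ := Finset.not_subset.1 hbs
        have hbj : b j ≠ 0 := Finsupp.mem_support_iff.1 hjs
        have := Finsupp.le_def.1 hble j
        rw [hsupp j hjV] at this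
        omega
  rw [hSS]
  have hmsum₀ : msum B₀ V ≤ msum B V :=
    msum_le_of_sublist List.filter_sublist V
  by_cases h0 : (0 : σ →₀ ℕ) ∈ B₀
  · have hemp : SS B₀ V = ∅ := by
      ext e
      simp only [Set.mem_empty_iff_false, iff_false]
      rintro ⟨_, hb⟩
      exact hb 0 h0 zero_le
    rw [hemp]
    exact isNRational_of_finite Set.finite_empty
  by_cases hnil : B₀ = []
  · have hfree : SS B₀ V = freeSet V := by
      rw [hnil]
      ext e
      exact ⟨fun h => h.1, fun h => ⟨h, by simp⟩⟩
    rw [hfree]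
    exact isNRational_free V
  obtain ⟨b₀, hb₀⟩ := List.exists_mem_of_ne_nil B₀ hnil
  have hb₀B : b₀ ∈ B ∧ b₀.support ⊆ V := (hmem₀ b₀).1 hb₀
  have hb₀0 : b₀ ≠ 0 := fun h => h0 (h ▸ hb₀)
  obtain ⟨i, hi⟩ := Finsupp.support_nonempty_iff.2 hb₀0
  have hiV : i ∈ V := hb₀B.2 hi
  have hb₀i : 1 ≤ b₀ i := Nat.one_le_iff_ne_zero.2 (Finsupp.mem_support_iff.1 hi)
  set B₁ := B₀.filter (fun b => decide (b i = 0)) with hB₁def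
  set B₂ := B₀.map (fun b => b - Finsupp.single i 1) with hB₂def
  have hsplit : SS B₀ V = SS B₁ (V.erase i) ∪
      {d | Finsupp.single i 1 ≤ d ∧ d - Finsupp.single i 1 ∈ SS B₂ V} := by
    ext e
    constructor
    · rintro ⟨hsupp, hb⟩
      by_cases hei : e i = 0
      · left
        refine ⟨fun j hj => ?_, fun b hbB₁ => hb b (List.mem_of_mem_filter hbB₁)⟩
        by_cases hji : j = i
        · subst hji; exact hei
        · exact hsupp j (fun hjV => hj (Finset.mem_erase.2 ⟨hji, hjV⟩))
      · right
        have h1 : Finsupp.single i 1 ≤ e :=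
          Finsupp.single_le_iff.2 (Nat.one_le_iff_ne_zero.2 hei)
        refine ⟨h1, fun j hj => ?_, fun b' hb' hle => ?_⟩
        · rw [Finsupp.tsub_apply, hsupp j hj, Nat.zero_sub]
        · obtain ⟨b, hbB₀, rfl⟩ := List.mem_map.1 hb'
          apply hb b hbB₀
          intro j
          by_cases hji : j = i
          · subst hji
            have := Finsupp.le_def.1 hle j
            rw [Finsupp.tsub_apply, Finsupp.tsub_apply, Finsupp.single_eq_same] at this
            have h2 := Finsupp.le_def.1 h1 j
            rw [Finsupp.single_eq_same] at h2
            omega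
          · have := Finsupp.le_def.1 hle j
            rw [Finsupp.tsub_apply, Finsupp.tsub_apply,
              Finsupp.single_eq_of_ne hji] at this
            omega
    · rintro (⟨hsupp, hb⟩ | ⟨hle, hsupp2, hb2⟩)
      · have hei : e i = 0 := hsupp i (Finset.notMem_erase i V)
        refine ⟨fun j hj => ?_, fun b hbB₀ hble => ?_⟩
        · by_cases hji : j = i
          · subst hji; exact hei
          · exact hsupp j (fun hc => hj (Finset.mem_of_mem_erase hc))
        · by_cases hbi : b i = 0
          · exact hb b (List.mem_filter.2 ⟨hbB₀, by simp [hbi]⟩) hble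
          · have := Finsupp.le_def.1 hble i
            omega
      · have hei : 1 ≤ e i := by
          have := Finsupp.le_def.1 hle i
          rwa [Finsupp.single_eq_same] at this
        refine ⟨fun j hj => ?_, fun b hbB₀ hble => ?_⟩
        · have hji : j ≠ i := fun h => (h ▸ hj) hiV
          have := hsupp2 j hj
          rwa [Finsupp.tsub_apply, Finsupp.single_eq_of_ne hji, Nat.sub_zero] at this
        · apply hb2 (b - Finsupp.single i 1) (List.mem_map.2 ⟨b, hbB₀, rfl⟩)
          intro j
          rw [Finsupp.tsub_apply, Finsupp.tsub_apply]
          have := Finsupp.le_def.1 hble j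
          by_cases hji : j = i
          · subst hji
            rw [Finsupp.single_eq_same]
            omega
          · rw [Finsupp.single_eq_of_ne hji]
            omega
  have hdisj : ∀ d, ¬ (d ∈ SS B₁ (V.erase i) ∧
      d ∈ {d | Finsupp.single i 1 ≤ d ∧ d - Finsupp.single i 1 ∈ SS B₂ V}) := by
    rintro d ⟨⟨hsupp, _⟩, ⟨hle, _⟩⟩
    have h1 : d i = 0 := hsupp i (Finset.notMem_erase i V)
    have h2 := Finsupp.le_def.1 hle i
    rw [Finsupp.single_eq_same] at h2
    omega
  rw [hsplit, ind_union _ _ hdisj, ind_shift]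
  have hVcard : 1 ≤ V.card := Finset.card_pos.2 ⟨i, hiV⟩
  have hmsum₁ : msum B₁ (V.erase i) ≤ msum B₀ V :=
    le_trans (msum_le_of_sublist List.filter_sublist _)
      (msum_mono_V B₀ (Finset.erase_subset i V))
  have hdrop : msum B₂ V < msum B₀ V := by
    have key : (B₀.map (fun b : σ →₀ ℕ => ∑ j ∈ V, ((b - Finsupp.single i 1 : σ →₀ ℕ)) j)).sum <
        (B₀.map (fun b : σ →₀ ℕ => ∑ j ∈ V, b j)).sum := by
      apply List.sum_lt_sum
      · intro b _
        apply Finset.sum_le_sum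
        intro j _
        rw [Finsupp.tsub_apply]
        omega
      · refine ⟨b₀, hb₀, ?_⟩
        have hsum1 : ∑ j ∈ V, ((b₀ - Finsupp.single i 1 : σ →₀ ℕ)) j
            = (∑ j ∈ V.erase i, ((b₀ - Finsupp.single i 1 : σ →₀ ℕ)) j) + (b₀ i - 1) := by
          rw [← Finset.sum_erase_add V _ hiV, Finsupp.tsub_apply, Finsupp.single_eq_same]
        have hsum2 : ∑ j ∈ V, b₀ j = (∑ j ∈ V.erase i, b₀ j) + b₀ i :=
          (Finset.sum_erase_add V _ hiV).symm
        have heq : ∑ j ∈ V.erase i, ((b₀ - Finsupp.single i 1 : σ →₀ ℕ)) j = ∑ j ∈ V.erase i, b₀ j := by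
          apply Finset.sum_congr rfl
          intro j hj
          rw [Finsupp.tsub_apply, Finsupp.single_eq_of_ne (Finset.mem_erase.1 hj).1,
            Nat.sub_zero]
        omega
    have : msum B₂ V = (B₀.map (fun b : σ →₀ ℕ => ∑ j ∈ V, ((b - Finsupp.single i 1 : σ →₀ ℕ)) j)).sum := by
      rw [hB₂def, msum, List.map_map]
      rfl
    rw [this]
    exact key
  refine MvPowerSeries.IsNRational.add ?_ (MvPowerSeries.IsNRational.mul ?_ ?_)
  · have hcard : (V.erase i).card = V.card - 1 := Finset.card_erase_of_mem hiV
    exact IHN ((V.erase i).card + msum B₁ (V.erase i)) (by omega) B₁ (V.erase i) le_rfl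
  · rw [← MvPolynomial.coe_monomial]
    exact MvPowerSeries.IsNRational.poly _
  · exact IHN (V.card + msum B₂ V) (by omega) B₂ V le_rfl

lemma isNRational_of_support_finite (f : MvPowerSeries σ ℕ)
    (h : {d | MvPowerSeries.coeff d f ≠ 0}.Finite) : IsNRational f := by
  classical
  have he : f = ((∑ d ∈ h.toFinset, MvPolynomial.monomial d (MvPowerSeries.coeff d f) :
      MvPolynomial σ ℕ) : MvPowerSeries σ ℕ) := by
    ext e
    rw [MvPolynomial.coeff_coe, MvPolynomial.coeff_sum]
    simp only [MvPolynomial.coeff_monomial]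
    rw [Finset.sum_ite_eq' h.toFinset e]
    by_cases hc : MvPowerSeries.coeff e f = 0
    · rw [hc]
      split <;> rfl
    · rw [if_pos (h.mem_toFinset.2 hc)]
  rw [he]
  exact MvPowerSeries.IsNRational.poly _

lemma antichain_finite {m : ℕ} (A : Set (Fin m →₀ ℕ))
    (h : ∀ a ∈ A, ∀ b ∈ A, a ≤ b → a = b) : A.Finite := by
  by_contra hinf
  have hpwo : A.IsPWO := Set.isPWO_of_wellQuasiOrderedLE A
  have hf := Set.Infinite.natEmbedding A hinf
  obtain ⟨a, b, hab, hle⟩ := hpwo.exists_lt (f := fun n => (hf n).1) (fun n => (hf n).2)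
  have : (hf a).1 = (hf b).1 := h _ (hf a).2 _ (hf b).2 hle
  have : a = b := hf.injective (Subtype.ext this)
  omega

lemma upset_eq_gens {m : ℕ} (U : Set (Fin m →₀ ℕ)) (hU : ∀ u ∈ U, ∀ v, u ≤ v → v ∈ U) :
    ∃ Bf : Finset (Fin m →₀ ℕ), U = {x | ∃ b ∈ Bf, b ≤ x} := by
  classical
  set Min := {u ∈ U | ∀ x ∈ U, ¬ x < u} with hMin
  have hfin : Min.Finite := by
    apply antichain_finite
    rintro a ⟨haU, hamin⟩ b ⟨hbU, hbmin⟩ hab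
    rcases eq_or_lt_of_le hab with h | h
    · exact h
    · exact absurd h (hbmin a haU)
  refine ⟨hfin.toFinset, ?_⟩
  ext x
  constructor
  · intro hx
    obtain ⟨u, huT, humin⟩ :=
      (wellFounded_lt : WellFounded ((· < ·) : (Fin m →₀ ℕ) → _ → Prop)).has_min
        {y ∈ U | y ≤ x} ⟨x, hx, le_rfl⟩
    refine ⟨u, hfin.mem_toFinset.2 ⟨huT.1, fun z hz hzlt => ?_⟩, huT.2⟩
    exact humin z ⟨hz, le_trans (le_of_lt hzlt) huT.2⟩ hzlt
  · rintro ⟨b, hb, hbx⟩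
    exact hU b (hfin.mem_toFinset.1 hb).1 x hbx

lemma isNRational_ind_of_downclosed {m : ℕ} (S : Set (Fin m →₀ ℕ))
    (hS : ∀ e ∈ S, ∀ d, d ≤ e → d ∈ S) : IsNRational (ind S) := by
  classical
  obtain ⟨Bf, hBf⟩ := upset_eq_gens Sᶜ (fun u hu v huv hvS => hu (hS v hvS u huv))
  have hSeq : S = SS Bf.toList Finset.univ := by
    ext e
    constructor
    · intro he
      refine ⟨fun j hj => absurd (Finset.mem_univ j) hj, fun b hb hble => ?_⟩
      have : e ∈ Sᶜ := by
        rw [hBf]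
        exact ⟨b, Finset.mem_toList.1 hb, hble⟩
      exact this he
    · rintro ⟨_, hb⟩
      by_contra hc
      have : e ∈ {x | ∃ b ∈ Bf, b ≤ x} := hBf ▸ hc
      obtain ⟨b, hbB, hble⟩ := this
      exact hb b (Finset.mem_toList.2 hbB) hble
  rw [hSeq]
  exact isNRational_SS (Finset.univ.card + msum Bf.toList Finset.univ) Bf.toList Finset.univ le_rfl

section Push

variable {k m : ℕ}

/-- Total weight of an exponent. -/
def wtHom : (Fin k →₀ ℕ) →+ ℕ where
  toFun d := ∑ i, d i
  map_zero' := by simp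
  map_add' a b := by
    simp only [Finsupp.add_apply]
    rw [Finset.sum_add_distrib]

lemma wtHom_eq_zero_iff (d : Fin k →₀ ℕ) : wtHom d = 0 ↔ d = 0 := by
  constructor
  · intro h
    have h' : ∑ i, d i = 0 := h
    ext j
    have := Finset.sum_eq_zero_iff.1 h' j (Finset.mem_univ j)
    simpa using this
  · rintro rfl
    simp [wtHom]

lemma le_wtHom (d : Fin k →₀ ℕ) (j : Fin k) : d j ≤ wtHom d :=
  Finset.single_le_sum (fun i _ => Nat.zero_le (d i)) (Finset.mem_univ j)

/-- Monoid map `ℕ^m → ℕ^k` sending the `j`-th basis vector to `g j`. -/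
noncomputable def phi (g : Fin m → (Fin k →₀ ℕ)) (e : Fin m →₀ ℕ) : Fin k →₀ ℕ :=
  e.sum fun j c => c • g j

lemma phi_zero (g : Fin m → (Fin k →₀ ℕ)) : phi g 0 = 0 :=
  Finsupp.sum_zero_index

lemma phi_add (g : Fin m → (Fin k →₀ ℕ)) (a b : Fin m →₀ ℕ) :
    phi g (a + b) = phi g a + phi g b :=
  Finsupp.sum_add_index' (fun j => zero_smul ℕ (g j)) (fun j c c' => add_smul c c' (g j))

lemma phi_single (g : Fin m → (Fin k →₀ ℕ)) (j : Fin m) (c : ℕ) :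
    phi g (Finsupp.single j c) = c • g j :=
  Finsupp.sum_single_index (zero_smul ℕ (g j))

lemma wtHom_phi (g : Fin m → (Fin k →₀ ℕ)) (e : Fin m →₀ ℕ) :
    wtHom (phi g e) = e.sum fun j c => c * wtHom (g j) := by
  rw [phi, map_finsuppSum]
  refine Finsupp.sum_congr (fun j _ => ?_)
  rw [map_nsmul, smul_eq_mul]

lemma coord_le_of_phi (g : Fin m → (Fin k →₀ ℕ)) (hg : ∀ j, g j ≠ 0)
    {e : Fin m →₀ ℕ} {d : Fin k →₀ ℕ} (he : phi g e = d) (j : Fin m) :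
    e j ≤ wtHom d := by
  by_cases hj : j ∈ e.support
  · have h1 : 1 ≤ wtHom (g j) :=
      Nat.one_le_iff_ne_zero.2 (fun h => hg j ((wtHom_eq_zero_iff (g j)).1 h))
    have h2 : e j ≤ e j * wtHom (g j) := Nat.le_mul_of_pos_right _ h1
    have h3 : e j * wtHom (g j) ≤ e.sum fun j c => c * wtHom (g j) :=
      Finset.single_le_sum (f := fun j => e j * wtHom (g j)) (fun i _ => Nat.zero_le _) hj
    rw [← he, wtHom_phi]
    exact le_trans h2 h3
  · rw [Finsupp.notMem_support_iff.1 hj]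
    exact Nat.zero_le _

lemma fib_finite (g : Fin m → (Fin k →₀ ℕ)) (hg : ∀ j, g j ≠ 0) (d : Fin k →₀ ℕ) :
    {e : Fin m →₀ ℕ | phi g e = d}.Finite := by
  apply Set.Finite.subset (Set.finite_Iic (Finsupp.equivFunOnFinite.symm fun _ => wtHom d))
  intro e he
  intro j
  exact le_trans (coord_le_of_phi g hg he j) le_rfl

variable (g : Fin m → (Fin k →₀ ℕ)) (hg : ∀ j, g j ≠ 0)
include hg

/-- Pushforward of a power series along `phi g`, adding up coefficients along fibers. -/
noncomputable def Phi (f : MvPowerSeries (Fin m) ℕ) : MvPowerSeries (Fin k) ℕ :=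
  fun d => ∑ e ∈ (fib_finite g hg d).toFinset, MvPowerSeries.coeff e f

lemma coeff_Phi (f : MvPowerSeries (Fin m) ℕ) (d : Fin k →₀ ℕ) :
    MvPowerSeries.coeff d (Phi g hg f) =
      ∑ e ∈ (fib_finite g hg d).toFinset, MvPowerSeries.coeff e f := rfl

lemma phi_eq_zero_iff (e : Fin m →₀ ℕ) : phi g e = 0 ↔ e = 0 := by
  constructor
  · intro h
    ext j
    simp only [Finsupp.coe_zero, Pi.zero_apply]
    have := coord_le_of_phi g hg h j
    simpa using this
  · rintro rfl
    exact phi_zero g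

lemma Phi_one : Phi g hg 1 = 1 := by
  ext d
  classical
  rw [coeff_Phi, MvPowerSeries.coeff_one]
  by_cases hd : d = 0
  · subst hd
    have hfib : (fib_finite g hg 0).toFinset = {0} := by
      ext e
      simp only [Set.Finite.mem_toFinset, Set.mem_setOf_eq, Finset.mem_singleton]
      exact phi_eq_zero_iff g hg e
    rw [hfib, if_pos rfl, Finset.sum_singleton, MvPowerSeries.coeff_zero_eq_constantCoeff]
    simp
  · rw [if_neg hd]
    apply Finset.sum_eq_zero
    intro e he
    rw [Set.Finite.mem_toFinset] at he
    rw [MvPowerSeries.coeff_one, if_neg]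
    rintro rfl
    exact hd (by rw [← he, phi_zero])

lemma Phi_add (f f' : MvPowerSeries (Fin m) ℕ) :
    Phi g hg (f + f') = Phi g hg f + Phi g hg f' := by
  ext d
  rw [map_add, coeff_Phi, coeff_Phi, coeff_Phi, ← Finset.sum_add_distrib]
  exact Finset.sum_congr rfl (fun e _ => map_add _ _ _)

lemma Phi_constantCoeff (f : MvPowerSeries (Fin m) ℕ) :
    MvPowerSeries.constantCoeff (Phi g hg f) =
      MvPowerSeries.constantCoeff f := by
  rw [← MvPowerSeries.coeff_zero_eq_constantCoeff, coeff_Phi]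
  have hfib : (fib_finite g hg 0).toFinset = {0} := by
    ext e
    simp only [Set.Finite.mem_toFinset, Set.mem_setOf_eq, Finset.mem_singleton]
    exact phi_eq_zero_iff g hg e
  rw [hfib, Finset.sum_singleton, MvPowerSeries.coeff_zero_eq_constantCoeff]

lemma Phi_mul (f f' : MvPowerSeries (Fin m) ℕ) :
    Phi g hg (f * f') = Phi g hg f * Phi g hg f' := by
  classical
  ext d
  rw [coeff_Phi, MvPowerSeries.coeff_mul]
  have lhs : ∑ e ∈ (fib_finite g hg d).toFinset, MvPowerSeries.coeff e (f * f') =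
      ∑ p ∈ (fib_finite g hg d).toFinset.biUnion (fun e => Finset.HasAntidiagonal.antidiagonal e),
        MvPowerSeries.coeff p.1 f * MvPowerSeries.coeff p.2 f' := by
    rw [Finset.sum_biUnion]
    · exact Finset.sum_congr rfl (fun e _ => MvPowerSeries.coeff_mul e f f')
    · intro x _ y _ hxy
      simp only [Finset.disjoint_left, Finset.HasAntidiagonal.mem_antidiagonal]
      intro p hp hq
      exact hxy (by rw [← hp, hq])
  have rhs : ∑ q ∈ Finset.HasAntidiagonal.antidiagonal d,
        MvPowerSeries.coeff q.1 (Phi g hg f) * MvPowerSeries.coeff q.2 (Phi g hg f') =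
      ∑ p ∈ (Finset.HasAntidiagonal.antidiagonal d).biUnion
          (fun q => (fib_finite g hg q.1).toFinset ×ˢ (fib_finite g hg q.2).toFinset),
        MvPowerSeries.coeff p.1 f * MvPowerSeries.coeff p.2 f' := by
    rw [Finset.sum_biUnion]
    · refine Finset.sum_congr rfl (fun q _ => ?_)
      rw [coeff_Phi, coeff_Phi, Finset.sum_mul_sum, Finset.sum_product]
    · rintro ⟨x1, x2⟩ _ ⟨y1, y2⟩ _ hxy
      simp only [Finset.disjoint_left, Finset.mem_product, Set.Finite.mem_toFinset,
        Set.mem_setOf_eq]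
      rintro ⟨a, b⟩ ⟨ha1, ha2⟩ ⟨hb1, hb2⟩
      exact hxy (by rw [← ha1, ← ha2, hb1, hb2])
  rw [lhs, rhs]
  apply Finset.sum_congr _ (fun _ _ => rfl)
  ext ⟨a, b⟩
  simp only [Finset.mem_biUnion, Set.Finite.mem_toFinset, Set.mem_setOf_eq,
    Finset.HasAntidiagonal.mem_antidiagonal, Finset.mem_product, Prod.exists]
  constructor
  · rintro ⟨e, he, hab⟩
    exact ⟨phi g a, phi g b, by rw [← he, ← hab, phi_add], rfl, rfl⟩
  · rintro ⟨q1, q2, hq, ha, hb⟩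
    exact ⟨a + b, by rw [phi_add, ha, hb, hq], rfl⟩

lemma isNRational_Phi {f : MvPowerSeries (Fin m) ℕ} (hf : IsNRational f) :
    IsNRational (Phi g hg f) := by
  induction hf with
  | poly P =>
      apply isNRational_of_support_finite
      apply Set.Finite.subset
        (Set.Finite.image (phi g)
          (Set.Finite.ofFinset (p := {e | MvPolynomial.coeff e P ≠ 0}) P.support (fun x => by
            simp [MvPolynomial.mem_support_iff])))
      intro d hd
      rw [Set.mem_setOf_eq, coeff_Phi] at hd
      obtain ⟨e, he, hne⟩ := Finset.exists_ne_zero_of_sum_ne_zero hd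
      rw [Set.Finite.mem_toFinset] at he
      refine ⟨e, ?_, he⟩
      rw [Set.mem_setOf_eq, ← MvPolynomial.coeff_coe]
      exact hne
  | add hf1 hf2 ih1 ih2 =>
      rw [Phi_add]
      exact MvPowerSeries.IsNRational.add ih1 ih2
  | mul hf1 hf2 ih1 ih2 =>
      rw [Phi_mul]
      exact MvPowerSeries.IsNRational.mul ih1 ih2
  | quasiInv hh hc he ih =>
      refine MvPowerSeries.IsNRational.quasiInv ih ?_ ?_
      · rw [Phi_constantCoeff]
        exact hc
      · conv_lhs => rw [he]
        rw [Phi_add, Phi_one, Phi_mul]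

end Push

section Main

variable {n k : ℕ} (v : Fin k → Fin n → ℤ)

/-- The linear map `ℕ^k → ℤ^n` determined by the vectors `v i`. -/
def linHom : (Fin k →₀ ℕ) →+ (Fin n → ℤ) where
  toFun d := ∑ i : Fin k, (d i : ℤ) • v i
  map_zero' := by simp
  map_add' a b := by
    simp only [Finsupp.add_apply, Nat.cast_add, add_smul]
    rw [Finset.sum_add_distrib]

end Main

end NRat

/-- Let `v_1, …, v_k ∈ ℤ^n` and let `𝒵 = {z ∈ ℕ^k : z_1 v_1 + ⋯ + z_k v_k = 0}`. Then the
generating function `Σ_{z ∈ 𝒵} y^z` is ℕ-rational. -/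
theorem kernel_genFun_isNRational (n k : ℕ) (v : Fin k → Fin n → ℤ) :
    MvPowerSeries.IsNRational
      ((fun d : Fin k →₀ ℕ => if ∑ i : Fin k, (d i : ℤ) • v i = 0 then 1 else 0) :
        MvPowerSeries (Fin k) ℕ) := by
  classical
  set M : Set (Fin k →₀ ℕ) := {d | NRat.linHom v d = 0} with hM
  have hser : ((fun d : Fin k →₀ ℕ => if ∑ i : Fin k, (d i : ℤ) • v i = 0 then 1 else 0) :
      MvPowerSeries (Fin k) ℕ) = NRat.ind M := by
    funext d
    have hiff : d ∈ M ↔ (∑ i : Fin k, (d i : ℤ) • v i) = 0 := Iff.rfl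
    by_cases h : d ∈ M
    · rw [if_pos (hiff.1 h)]
      show _ = MvPowerSeries.coeff d (NRat.ind M)
      rw [NRat.coeff_ind, if_pos h]
    · rw [if_neg (fun hc => h (hiff.2 hc))]
      show _ = MvPowerSeries.coeff d (NRat.ind M)
      rw [NRat.coeff_ind, if_neg h]
  have hMsub : ∀ d ∈ M, ∀ u ∈ M, u ≤ d → d - u ∈ M := by
    intro d hd u hu hle
    have hd' : NRat.linHom v d = 0 := hd
    have hu' : NRat.linHom v u = 0 := hu
    have hsum : NRat.linHom v d = NRat.linHom v u + NRat.linHom v (d - u) := by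
      rw [← map_add, add_tsub_cancel_of_le hle]
    show NRat.linHom v (d - u) = 0
    rw [hd', hu', zero_add] at hsum
    exact hsum.symm
  set Mn : Set (Fin k →₀ ℕ) := {u | u ∈ M ∧ u ≠ 0 ∧ ∀ x ∈ M, x ≠ 0 → ¬ x < u} with hMnDef
  have hMnFin : Mn.Finite := by
    apply NRat.antichain_finite
    rintro a ⟨haM, ha0, _⟩ b ⟨hbM, hb0, hbmin⟩ hab
    rcases eq_or_lt_of_le hab with h | h
    · exact h
    · exact absurd h (hbmin a haM ha0)
  set m := hMnFin.toFinset.card with hmdef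
  set g : Fin m → (Fin k →₀ ℕ) := fun j => (hMnFin.toFinset.equivFin.symm j).1 with hgdef
  have hgMn : ∀ j, g j ∈ Mn := fun j =>
    hMnFin.mem_toFinset.1 (hMnFin.toFinset.equivFin.symm j).2
  have hgM : ∀ j, g j ∈ M := fun j => (hgMn j).1
  have hg0 : ∀ j, g j ≠ 0 := fun j => (hgMn j).2.1
  have hgsurj : ∀ u ∈ Mn, ∃ j, g j = u := by
    intro u hu
    refine ⟨hMnFin.toFinset.equivFin ⟨u, hMnFin.mem_toFinset.2 hu⟩, ?_⟩
    rw [hgdef]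
    simp
  have hphiM : ∀ e, NRat.phi g e ∈ M := by
    intro e
    show NRat.linHom v (NRat.phi g e) = 0
    rw [NRat.phi, map_finsuppSum]
    have hz : ∀ j ∈ e.support, NRat.linHom v (e j • g j) = 0 := by
      intro j _
      rw [map_nsmul, show NRat.linHom v (g j) = 0 from hgM j, smul_zero]
    have heq : (e.sum fun j c => NRat.linHom v (c • g j)) =
        e.sum fun (_ : Fin m) (_ : ℕ) => (0 : Fin n → ℤ) := Finsupp.sum_congr hz
    rw [heq]
    exact Finset.sum_const_zero
  have hgen : ∀ (w : ℕ) (d : Fin k →₀ ℕ), NRat.wtHom d ≤ w → d ∈ M →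
      ∃ e, NRat.phi g e = d := by
    intro w
    induction w with
    | zero =>
        intro d hw hd
        have hd0 : d = 0 := (NRat.wtHom_eq_zero_iff d).1 (Nat.le_zero.1 hw)
        exact ⟨0, by rw [NRat.phi_zero, hd0]⟩
    | succ w ih =>
        intro d hw hd
        by_cases hd0 : d = 0
        · exact ⟨0, by rw [NRat.phi_zero, hd0]⟩
        · obtain ⟨u, ⟨huM, hu0, hud⟩, humin⟩ :=
            (wellFounded_lt : WellFounded ((· < ·) : (Fin k →₀ ℕ) → _ → Prop)).has_min
              {x | x ∈ M ∧ x ≠ 0 ∧ x ≤ d} ⟨d, hd, hd0, le_rfl⟩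
          have huMn : u ∈ Mn := ⟨huM, hu0, fun x hxM hx0 hxu =>
            humin x ⟨hxM, hx0, le_trans (le_of_lt hxu) hud⟩ hxu⟩
          obtain ⟨j, hj⟩ := hgsurj u huMn
          have hsubM : d - u ∈ M := hMsub d hd u huM hud
          have hwt : NRat.wtHom (d - u) ≤ w := by
            have h1 : NRat.wtHom d = NRat.wtHom u + NRat.wtHom (d - u) := by
              rw [← map_add, add_tsub_cancel_of_le hud]
            have h2 : 1 ≤ NRat.wtHom u :=
              Nat.one_le_iff_ne_zero.2 (fun h => hu0 ((NRat.wtHom_eq_zero_iff u).1 h))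
            omega
          obtain ⟨e, he⟩ := ih (d - u) hwt hsubM
          refine ⟨e + Finsupp.single j 1, ?_⟩
          rw [NRat.phi_add, he, NRat.phi_single, hj, one_smul]
          exact tsub_add_cancel_of_le hud
  set S : Set (Fin m →₀ ℕ) :=
    {e | ∀ e', NRat.phi g e' = NRat.phi g e → toLex e ≤ toLex e'} with hSdef
  have hSdown : ∀ e ∈ S, ∀ d, d ≤ e → d ∈ S := by
    intro e heS d hde
    intro d' hd'
    by_contra hc
    have hlt : toLex d' < toLex d := lt_of_not_ge hc
    have hc' : d + (e - d) = e := add_tsub_cancel_of_le hde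
    have hphi : NRat.phi g (d' + (e - d)) = NRat.phi g e := by
      rw [NRat.phi_add, hd', ← NRat.phi_add, hc']
    have h1 : toLex e ≤ toLex (d' + (e - d)) := heS _ hphi
    have h2 : toLex (d' + (e - d)) < toLex (d + (e - d)) :=
      add_lt_add_left hlt (toLex (e - d))
    rw [hc'] at h2
    exact absurd (lt_of_le_of_lt h1 h2) (lt_irrefl _)
  have hSuniq : ∀ e ∈ S, ∀ e' ∈ S, NRat.phi g e = NRat.phi g e' → e = e' := by
    intro e he e' he' hphi
    have h1 := he e' hphi.symm
    have h2 := he' e hphi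
    exact toLex.injective (le_antisymm h1 h2)
  have hSex : ∀ d ∈ M, ∃ e ∈ S, NRat.phi g e = d := by
    intro d hd
    obtain ⟨e0, he0⟩ := hgen (NRat.wtHom d) d le_rfl hd
    obtain ⟨x, hx, hxmin⟩ :=
      (Finsupp.Lex.wellFoundedLT_of_finite : WellFoundedLT (Lex (Fin m →₀ ℕ))).wf.has_min
        {y : Lex (Fin m →₀ ℕ) | NRat.phi g (ofLex y) = d} ⟨toLex e0, he0⟩
    refine ⟨ofLex x, ?_, hx⟩
    intro e' he'
    have hnlt : ¬ toLex e' < x := hxmin (toLex e') (show NRat.phi g e' = d from he'.trans hx)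
    exact le_of_not_gt hnlt
  have hkey : NRat.Phi g hg0 (NRat.ind S) = NRat.ind M := by
    ext d
    rw [NRat.coeff_Phi, NRat.coeff_ind]
    by_cases hd : d ∈ M
    · obtain ⟨e0, he0S, he0⟩ := hSex d hd
      rw [if_pos hd]
      rw [Finset.sum_eq_single_of_mem e0 ((NRat.fib_finite g hg0 d).mem_toFinset.2 he0)]
      · rw [NRat.coeff_ind, if_pos he0S]
      · intro e he hne
        rw [Set.Finite.mem_toFinset] at he
        rw [NRat.coeff_ind, if_neg]
        intro heS
        exact hne (hSuniq e heS e0 he0S (by rw [he, he0]))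
    · rw [if_neg hd]
      apply Finset.sum_eq_zero
      intro e he
      rw [Set.Finite.mem_toFinset] at he
      exact absurd (he ▸ hphiM e) hd
  rw [hser, ← hkey]
  exact NRat.isNRational_Phi g hg0 (NRat.isNRational_ind_of_downclosed S hSdown)
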